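/- Fix a finite state space S, a probability mass function P⋆ on S, σ > 0, and two functions V̄, V̲ : S → [0, H] with V̲ ≤ V̄ pointwise. Let Φ(W) = sup_{η ∈ [η̲, H/σ]} { -η log(E_{P⋆}[exp(-W/η)]) - η σ } for η̲ > 0. Then Φ(V̄) - Φ(V̲) ≤ exp(H/η̲) · E_{P⋆}[V̄ - V̲]. -/

import Mathlib

/-- KL-robust expectation comparison: with
`Φ(W) = sup_{η ∈ [η̲, H/σ]} { -η log E_{P⋆}[exp(-W/η)] - ησ }` and `V̲ ≤ V̄`,
`Φ(V̄) - Φ(V̲) ≤ exp(H/η̲) · E_{P⋆}[V̄ - V̲]`. -/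
theorem kl_robust_value_diff_le {S : Type*} [Fintype S] [Nonempty S]
    (Pstar : S → ℝ) (hP : ∀ s, 0 ≤ Pstar s) (hP1 : ∑ s, Pstar s = 1)
    (σ : ℝ) (hσ : 0 < σ) (H : ℝ) (hH : 0 ≤ H) (ηlo : ℝ) (hηlo : 0 < ηlo)
    (Vup Vlo : S → ℝ)
    (hVup0 : ∀ s, 0 ≤ Vup s) (hVupH : ∀ s, Vup s ≤ H)
    (hVlo0 : ∀ s, 0 ≤ Vlo s) (hVloH : ∀ s, Vlo s ≤ H)
    (hle : ∀ s, Vlo s ≤ Vup s) :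
    sSup {y : ℝ | ∃ η ∈ Set.Icc ηlo (H / σ),
        y = -η * Real.log (∑ s, Pstar s * Real.exp (-(Vup s) / η)) - η * σ}
    - sSup {y : ℝ | ∃ η ∈ Set.Icc ηlo (H / σ),
        y = -η * Real.log (∑ s, Pstar s * Real.exp (-(Vlo s) / η)) - η * σ}
      ≤ Real.exp (H / ηlo) * ∑ s, Pstar s * (Vup s - Vlo s) := by
  set C : ℝ := Real.exp (H / ηlo) * ∑ s, Pstar s * (Vup s - Vlo s) with hCdef
  have hCnn : 0 ≤ C := by
    apply mul_nonneg (Real.exp_pos _).le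
    exact Finset.sum_nonneg fun s _ => mul_nonneg (hP s) (sub_nonneg.2 (hle s))
  by_cases hcase : ηlo ≤ H / σ
  · -- lower bound for the expectation of exp(-W/η)
    have Alow : ∀ (W : S → ℝ), (∀ s, W s ≤ H) → ∀ η : ℝ, 0 < η →
        Real.exp (-H / η) ≤ ∑ s, Pstar s * Real.exp (-(W s) / η) := by
      intro W hW η hηpos
      calc Real.exp (-H / η) = ∑ s, Pstar s * Real.exp (-H / η) := by
            rw [← Finset.sum_mul, hP1, one_mul]
        _ ≤ ∑ s, Pstar s * Real.exp (-(W s) / η) := by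
            apply Finset.sum_le_sum
            intro s _
            apply mul_le_mul_of_nonneg_left _ (hP s)
            exact Real.exp_le_exp.2 (div_le_div_of_nonneg_right (neg_le_neg (hW s)) hηpos.le)
    have Apos : ∀ (W : S → ℝ), (∀ s, W s ≤ H) → ∀ η : ℝ, 0 < η →
        0 < ∑ s, Pstar s * Real.exp (-(W s) / η) := fun W hW η hη =>
      lt_of_lt_of_le (Real.exp_pos _) (Alow W hW η hη)
    -- key pointwise inequality
    have key : ∀ η ∈ Set.Icc ηlo (H / σ),
        -η * Real.log (∑ s, Pstar s * Real.exp (-(Vup s) / η)) - η * σ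
          ≤ (-η * Real.log (∑ s, Pstar s * Real.exp (-(Vlo s) / η)) - η * σ) + C := by
      intro η hη
      have hηpos : 0 < η := lt_of_lt_of_le hηlo hη.1
      set A := ∑ s, Pstar s * Real.exp (-(Vup s) / η) with hA
      set B := ∑ s, Pstar s * Real.exp (-(Vlo s) / η) with hB
      have hApos : 0 < A := Apos Vup hVupH η hηpos
      have hBpos : 0 < B := Apos Vlo hVloH η hηpos
      have hBA : Real.log B - Real.log A ≤ (B - A) / A := by
        have := Real.log_le_sub_one_of_pos (div_pos hBpos hApos)
        rw [Real.log_div hBpos.ne' hApos.ne'] at this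
        calc Real.log B - Real.log A ≤ B / A - 1 := this
          _ = (B - A) / A := by field_simp
      -- Lipschitz bound: B - A ≤ (1/η) * Σ p (Vup - Vlo)
      have hdiff : B - A ≤ (∑ s, Pstar s * (Vup s - Vlo s)) / η := by
        rw [hA, hB, ← Finset.sum_sub_distrib, Finset.sum_div]
        apply Finset.sum_le_sum
        intro s _
        rw [← mul_sub, mul_div_assoc]
        apply mul_le_mul_of_nonneg_left _ (hP s)
        have h1 : Real.exp (-(Vlo s) / η) - Real.exp (-(Vup s) / η)
            ≤ Real.exp (-(Vlo s) / η) * ((Vup s - Vlo s) / η) := by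
          have : Real.exp (-(Vup s) / η) = Real.exp (-(Vlo s) / η) *
              Real.exp (-((Vup s - Vlo s) / η)) := by
            rw [← Real.exp_add]; ring_nf
          rw [this, ← mul_one_sub]
          apply mul_le_mul_of_nonneg_left _ (Real.exp_pos _).le
          have := Real.add_one_le_exp (-((Vup s - Vlo s) / η))
          linarith
        have h2 : Real.exp (-(Vlo s) / η) ≤ 1 := by
          apply Real.exp_le_one_iff.mpr
          apply div_nonpos_of_nonpos_of_nonneg (neg_nonpos.2 (hVlo0 s)) hηpos.le
        calc Real.exp (-(Vlo s) / η) - Real.exp (-(Vup s) / η)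
            ≤ Real.exp (-(Vlo s) / η) * ((Vup s - Vlo s) / η) := h1
          _ ≤ 1 * ((Vup s - Vlo s) / η) := by
              apply mul_le_mul_of_nonneg_right h2
              exact div_nonneg (sub_nonneg.2 (hle s)) hηpos.le
          _ = (Vup s - Vlo s) / η := one_mul _
      have hAinv : 1 / A ≤ Real.exp (H / ηlo) := by
        rw [div_le_iff₀ hApos]
        have h1 : Real.exp (-H / η) ≤ A := Alow Vup hVupH η hηpos
        have h2 : Real.exp (-(H / ηlo)) ≤ Real.exp (-H / η) := by
          apply Real.exp_le_exp.2
          rw [neg_div, neg_le_neg_iff]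
          exact div_le_div_of_nonneg_left hH hηlo hη.1
        calc (1:ℝ) = Real.exp (H / ηlo) * Real.exp (-(H / ηlo)) := by
              rw [← Real.exp_add]; ring_nf; rw [Real.exp_zero]
          _ ≤ Real.exp (H / ηlo) * A :=
              mul_le_mul_of_nonneg_left (h2.trans h1) (Real.exp_pos _).le
      -- combine
      have hsum_nn : 0 ≤ ∑ s, Pstar s * (Vup s - Vlo s) :=
        Finset.sum_nonneg fun s _ => mul_nonneg (hP s) (sub_nonneg.2 (hle s))
      have main : η * (Real.log B - Real.log A) ≤ C := by
        calc η * (Real.log B - Real.log A) ≤ η * ((B - A) / A) := by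
              apply mul_le_mul_of_nonneg_left hBA hηpos.le
          _ ≤ η * ((∑ s, Pstar s * (Vup s - Vlo s)) / η / A) := by
              apply mul_le_mul_of_nonneg_left _ hηpos.le
              exact div_le_div_of_nonneg_right hdiff hApos.le
          _ = (∑ s, Pstar s * (Vup s - Vlo s)) * (1 / A) := by
              field_simp
          _ ≤ (∑ s, Pstar s * (Vup s - Vlo s)) * Real.exp (H / ηlo) :=
              mul_le_mul_of_nonneg_left hAinv hsum_nn
          _ = C := by rw [hCdef]; ring
      linarith [main]
    -- boundedness and nonemptiness
    have bdd : ∀ (W : S → ℝ), (∀ s, W s ≤ H) →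
        ∀ y ∈ {y : ℝ | ∃ η ∈ Set.Icc ηlo (H / σ),
          y = -η * Real.log (∑ s, Pstar s * Real.exp (-(W s) / η)) - η * σ}, y ≤ H := by
      rintro W hW y ⟨η, hη, rfl⟩
      have hηpos : 0 < η := lt_of_lt_of_le hηlo hη.1
      have h1 : Real.exp (-H / η) ≤ ∑ s, Pstar s * Real.exp (-(W s) / η) :=
        Alow W hW η hηpos
      have h2 : -H / η ≤ Real.log (∑ s, Pstar s * Real.exp (-(W s) / η)) :=
        (Real.le_log_iff_exp_le (Apos W hW η hηpos)).2 h1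
      have h3 : -η * Real.log (∑ s, Pstar s * Real.exp (-(W s) / η)) ≤ H := by
        have := mul_le_mul_of_nonneg_left h2 hηpos.le
        have heq : η * (-H / η) = -H := by field_simp
        nlinarith
      nlinarith [mul_pos hηpos hσ]
    have hne1 : {y : ℝ | ∃ η ∈ Set.Icc ηlo (H / σ),
        y = -η * Real.log (∑ s, Pstar s * Real.exp (-(Vup s) / η)) - η * σ}.Nonempty :=
      ⟨_, ηlo, ⟨le_refl _, hcase⟩, rfl⟩
    have hne2 : {y : ℝ | ∃ η ∈ Set.Icc ηlo (H / σ),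
        y = -η * Real.log (∑ s, Pstar s * Real.exp (-(Vlo s) / η)) - η * σ}.Nonempty :=
      ⟨_, ηlo, ⟨le_refl _, hcase⟩, rfl⟩
    have hbdd2 : BddAbove {y : ℝ | ∃ η ∈ Set.Icc ηlo (H / σ),
        y = -η * Real.log (∑ s, Pstar s * Real.exp (-(Vlo s) / η)) - η * σ} :=
      ⟨H, fun y hy => bdd Vlo hVloH y hy⟩
    rw [sub_le_iff_le_add, add_comm]
    apply csSup_le hne1
    rintro y ⟨η, hη, rfl⟩
    calc -η * Real.log (∑ s, Pstar s * Real.exp (-(Vup s) / η)) - η * σ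
        ≤ (-η * Real.log (∑ s, Pstar s * Real.exp (-(Vlo s) / η)) - η * σ) + C :=
          key η hη
      _ ≤ sSup {y : ℝ | ∃ η ∈ Set.Icc ηlo (H / σ),
            y = -η * Real.log (∑ s, Pstar s * Real.exp (-(Vlo s) / η)) - η * σ} + C := by
          apply add_le_add_left
          exact le_csSup hbdd2 ⟨η, hη, rfl⟩
  · have h1 : {y : ℝ | ∃ η ∈ Set.Icc ηlo (H / σ),
        y = -η * Real.log (∑ s, Pstar s * Real.exp (-(Vup s) / η)) - η * σ} = ∅ := by
      ext y; simp only [Set.mem_setOf_eq, Set.mem_empty_iff_false, iff_false]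
      rintro ⟨η, ⟨ha, hb⟩, -⟩; exact hcase (ha.trans hb)
    have h2 : {y : ℝ | ∃ η ∈ Set.Icc ηlo (H / σ),
        y = -η * Real.log (∑ s, Pstar s * Real.exp (-(Vlo s) / η)) - η * σ} = ∅ := by
      ext y; simp only [Set.mem_setOf_eq, Set.mem_empty_iff_false, iff_false]
      rintro ⟨η, ⟨ha, hb⟩, -⟩; exact hcase (ha.trans hb)
    rw [h1, h2, Real.sSup_empty, sub_zero]
    exact hCnn
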